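/- (Derivative bound for the asymptotic profile) For t > 0 and Schwartz u, the profile γ(t,v) = ∫ u(t,x) e^{−ix²/(4t)} conj(χ((x−vt)/√t)) dx satisfies ‖∂_v γ(t,·)‖_{L²_v} ≤ C ‖Lu(t,·)‖_{L²_x}, where Lu = xu + 2it∂ₓu and C depends only on χ. -/

import Mathlib

open Complex MeasureTheory
open scoped ENNReal

/-- The asymptotic profile `γ(t,v) = ∫ u(x) e^{−ix²/(4t)} conj(χ((x−vt)/√t)) dx`. -/
noncomputable def asymProfile (χ : SchwartzMap ℝ ℂ) (u : ℝ → ℂ) (t v : ℝ) : ℂ :=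
  ∫ x : ℝ, u x * Complex.exp (-I * (x : ℂ) ^ 2 / (4 * (t : ℂ))) *
    (starRingEnd ℂ) (χ ((x - v * t) / Real.sqrt t))

noncomputable def mulXCLM : SchwartzMap ℝ ℂ →L[ℝ] SchwartzMap ℝ ℂ :=
  SchwartzMap.bilinLeftCLM ((ContinuousLinearMap.lsmul ℝ ℝ (E := ℂ)).flip)
    (ContinuousLinearMap.hasTemperateGrowth (ContinuousLinearMap.id ℝ ℝ))

noncomputable def LOp (t : ℝ) (u : SchwartzMap ℝ ℂ) : SchwartzMap ℝ ℂ :=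
  mulXCLM u + (2 * I * (t : ℂ)) • SchwartzMap.derivCLM ℝ ℂ u

lemma LOp_apply (t : ℝ) (u : SchwartzMap ℝ ℂ) (x : ℝ) :
    LOp t u x = (x : ℂ) * u x + 2 * I * (t : ℂ) * deriv u x := by
  have h1 : mulXCLM u x = (x : ℂ) * u x := by
    simp [mulXCLM, SchwartzMap.bilinLeftCLM, SchwartzMap.mkCLM, SchwartzMap.mkLM,
      Complex.real_smul]
    rfl
  simp [LOp, h1, SchwartzMap.derivCLM_apply]

noncomputable def eFactor (t x : ℝ) : ℂ := Complex.exp (-I * (x : ℂ) ^ 2 / (4 * (t : ℂ)))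

noncomputable def Fn (t : ℝ) (u : SchwartzMap ℝ ℂ) (x : ℝ) : ℂ := u x * eFactor t x

noncomputable def Gn (t : ℝ) (u : SchwartzMap ℝ ℂ) (x : ℝ) : ℂ := eFactor t x * LOp t u x

lemma norm_eFactor (t x : ℝ) : ‖eFactor t x‖ = 1 := by
  have h : -I * (x : ℂ) ^ 2 / (4 * (t : ℂ)) = ((-(x ^ 2 / (4 * t)) : ℝ) : ℂ) * I := by
    push_cast; ring
  rw [eFactor, h, Complex.norm_exp_ofReal_mul_I]

lemma norm_Gn (t : ℝ) (u : SchwartzMap ℝ ℂ) (x : ℝ) : ‖Gn t u x‖ = ‖LOp t u x‖ := by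
  rw [Gn, norm_mul, norm_eFactor, one_mul]

lemma continuous_eFactor (t : ℝ) : Continuous (eFactor t) := by
  unfold eFactor; fun_prop

lemma hasDerivAt_Fn {t : ℝ} (ht : 0 < t) (u : SchwartzMap ℝ ℂ) (x : ℝ) :
    HasDerivAt (Fn t u) (-(I / (2 * (t : ℂ))) * Gn t u x) x := by
  have htC : (t : ℂ) ≠ 0 := by exact_mod_cast ht.ne'
  have he : HasDerivAt (fun z : ℂ => Complex.exp (-I * z ^ 2 / (4 * (t : ℂ))))
      (Complex.exp (-I * (x : ℂ) ^ 2 / (4 * (t : ℂ))) * (-I * (2 * (x : ℂ)) / (4 * (t : ℂ))))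
      (x : ℂ) := by
    have h1 : HasDerivAt (fun z : ℂ => -I * z ^ 2 / (4 * (t : ℂ)))
        (-I * (2 * (x : ℂ)) / (4 * (t : ℂ))) (x : ℂ) := by
      simpa [mul_comm, mul_assoc, mul_div_assoc] using
        (((hasDerivAt_pow 2 (x : ℂ)).const_mul (-I)).div_const (4 * (t : ℂ)))
    simpa [mul_comm] using h1.cexp
  have heR : HasDerivAt (eFactor t)
      (Complex.exp (-I * (x : ℂ) ^ 2 / (4 * (t : ℂ))) * (-I * (2 * (x : ℂ)) / (4 * (t : ℂ)))) x :=
    he.comp_ofReal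
  have hu : HasDerivAt (fun y : ℝ => u y) (deriv u x) x :=
    (u.differentiable.differentiableAt).hasDerivAt
  have := hu.mul heR
  convert this using 1
  · rfl
  · rfl
  simp only [Gn, LOp_apply, eFactor]
  field_simp
  ring_nf
  simp [Complex.I_sq]

lemma gamma_cov (χ u : SchwartzMap ℝ ℂ) {t : ℝ} (ht : 0 < t) (w : ℝ) :
    asymProfile χ (fun x => u x) t w =
      Real.sqrt t • ∫ y : ℝ, Fn t u (w * t + Real.sqrt t * y) * (starRingEnd ℂ) (χ y) := by
  set s := Real.sqrt t with hsdef
  have hs : 0 < s := Real.sqrt_pos.mpr ht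
  set f : ℝ → ℂ := fun x => u x * Complex.exp (-I * (x : ℂ) ^ 2 / (4 * (t : ℂ))) *
    (starRingEnd ℂ) (χ ((x - w * t) / s)) with hf
  have h1 : ∀ y : ℝ, Fn t u (w * t + s * y) * (starRingEnd ℂ) (χ y) = f (s * y + w * t) := by
    intro y
    have hy : (s * y + w * t - w * t) / s = y := by field_simp; ring
    rw [hf]
    simp only [hy, Fn, eFactor]
    ring_nf
  have h2 : (∫ y : ℝ, f (s * y + w * t)) = |s⁻¹| • ∫ x : ℝ, f x := by
    rw [MeasureTheory.Measure.integral_comp_mul_left (fun z => f (z + w * t)) s,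
      integral_add_right_eq_self f (w * t)]
  simp_rw [h1]
  rw [h2, smul_smul, abs_of_pos (inv_pos.mpr hs), mul_inv_cancel₀ hs.ne', one_smul]
  rfl

lemma hasDerivAt_gamma (χ u : SchwartzMap ℝ ℂ) {t : ℝ} (ht : 0 < t) (v : ℝ) :
    HasDerivAt (fun w : ℝ => asymProfile χ (fun x => u x) t w)
      (Real.sqrt t • ∫ y : ℝ,
        ((t : ℝ) • (-(I / (2 * (t : ℂ))) * Gn t u (v * t + Real.sqrt t * y))) *
          (starRingEnd ℂ) (χ y)) v := by
  set s := Real.sqrt t with hsdef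
  have hs : 0 < s := Real.sqrt_pos.mpr ht
  set M : ℝ := SchwartzMap.seminorm ℝ 0 0 (LOp t u) with hM
  have hLbound : ∀ z, ‖LOp t u z‖ ≤ M := fun z => (LOp t u).norm_le_seminorm ℝ z
  set Mu : ℝ := SchwartzMap.seminorm ℝ 0 0 u with hMu
  have hubound : ∀ z, ‖u z‖ ≤ Mu := fun z => u.norm_le_seminorm ℝ z
  have hnorm2t : ‖(2 * (t : ℂ))‖ = 2 * t := by
    rw [show (2 * (t : ℂ)) = ((2 * t : ℝ) : ℂ) by push_cast; ring, Complex.norm_real,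
      Real.norm_eq_abs, abs_of_pos (by linarith)]
  have hFncont : Continuous (Fn t u) := u.continuous.mul (continuous_eFactor t)
  have hGncont : Continuous (Gn t u) := (continuous_eFactor t).mul (LOp t u).continuous
  have hχconj : Continuous fun y : ℝ => (starRingEnd ℂ) (χ y) := continuous_star.comp χ.continuous
  have hFnnorm : ∀ x, ‖Fn t u x‖ = ‖u x‖ := fun x => by
    rw [Fn, norm_mul, norm_eFactor, mul_one]
  set F : ℝ → ℝ → ℂ := fun w y => Fn t u (w * t + s * y) * (starRingEnd ℂ) (χ y) with hF
  set F' : ℝ → ℝ → ℂ := fun w y =>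
    ((t : ℝ) • (-(I / (2 * (t : ℂ))) * Gn t u (w * t + s * y))) * (starRingEnd ℂ) (χ y) with hF'
  have hF'norm : ∀ w y, ‖F' w y‖ = (1 / 2) * (‖LOp t u (w * t + s * y)‖ * ‖χ y‖) := by
    intro w y
    rw [hF']
    simp only [norm_mul, norm_smul, Real.norm_eq_abs, abs_of_pos ht, norm_neg, norm_div,
      Complex.norm_I, hnorm2t, norm_Gn, RCLike.norm_conj]
    field_simp
  have key : HasDerivAt (fun w => ∫ y : ℝ, F w y) (∫ y : ℝ, F' v y) v := by
    have hmeas : ∀ᶠ w in nhds v, AEStronglyMeasurable (F w) volume :=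
      Filter.Eventually.of_forall fun w =>
        ((hFncont.comp (by fun_prop : Continuous fun y : ℝ => w * t + s * y)).mul
          hχconj).aestronglyMeasurable
    have hint : Integrable (F v) volume := by
      refine ((χ.integrable.norm.const_mul Mu).mono'
        ((hFncont.comp (by fun_prop : Continuous fun y : ℝ => v * t + s * y)).mul
          hχconj).aestronglyMeasurable ?_)
      refine Filter.Eventually.of_forall fun y => ?_
      rw [hF, norm_mul, hFnnorm, RCLike.norm_conj]
      exact mul_le_mul_of_nonneg_right (hubound _) (norm_nonneg _)
    have hmeas' : AEStronglyMeasurable (F' v) volume := by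
      refine Continuous.aestronglyMeasurable ?_
      have hc1 : Continuous fun y : ℝ => Gn t u (v * t + s * y) :=
        hGncont.comp (by fun_prop)
      exact ((continuous_const.mul hc1).const_smul (t : ℝ)).mul hχconj
    have hbound : ∀ᵐ y : ℝ, ∀ w ∈ Metric.ball v 1, ‖F' w y‖ ≤ (M / 2) * ‖χ y‖ := by
      refine Filter.Eventually.of_forall fun y w _ => ?_
      rw [hF'norm w y]
      have := hLbound (w * t + s * y)
      nlinarith [norm_nonneg (χ y), norm_nonneg (LOp t u (w * t + s * y))]
    have hbint : Integrable (fun y : ℝ => (M / 2) * ‖χ y‖) volume :=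
      χ.integrable.norm.const_mul _
    have hdiff : ∀ᵐ y : ℝ, ∀ w ∈ Metric.ball v 1, HasDerivAt (fun w' => F w' y) (F' w y) w := by
      refine Filter.Eventually.of_forall fun y w _ => ?_
      have hl : HasDerivAt (fun w' : ℝ => w' * t + s * y) t w :=
        (hasDerivAt_mul_const t).add_const _
      have h2 := (hasDerivAt_Fn ht u (w * t + s * y)).scomp w hl
      exact h2.mul_const _
    exact (hasDerivAt_integral_of_dominated_loc_of_deriv_le (Metric.ball_mem_nhds v one_pos) hmeas hint hmeas'
      hbound hbint hdiff).2
  have heq : (fun w : ℝ => asymProfile χ (fun x => u x) t w) = fun w => s • ∫ y : ℝ, F w y :=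
    funext fun w => gamma_cov χ u ht w
  rw [heq]
  exact key.const_smul s

lemma norm_deriv_gamma_le (χ u : SchwartzMap ℝ ℂ) {t : ℝ} (ht : 0 < t) (v : ℝ) :
    ‖deriv (fun w : ℝ => asymProfile χ (fun x => u x) t w) v‖ ≤
      (Real.sqrt t / 2) * ∫ y : ℝ, ‖LOp t u (v * t + Real.sqrt t * y)‖ * ‖χ y‖ := by
  set s := Real.sqrt t with hsdef
  have hs : 0 < s := Real.sqrt_pos.mpr ht
  have hnorm2t : ‖(2 * (t : ℂ))‖ = 2 * t := by
    rw [show (2 * (t : ℂ)) = ((2 * t : ℝ) : ℂ) by push_cast; ring, Complex.norm_real,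
      Real.norm_eq_abs, abs_of_pos (by linarith)]
  have hptnorm : ∀ y : ℝ,
      ‖((t : ℝ) • (-(I / (2 * (t : ℂ))) * Gn t u (v * t + s * y))) * (starRingEnd ℂ) (χ y)‖ =
        (1 / 2) * (‖LOp t u (v * t + s * y)‖ * ‖χ y‖) := by
    intro y
    simp only [norm_mul, norm_smul, Real.norm_eq_abs, abs_of_pos ht, norm_neg, norm_div,
      Complex.norm_I, hnorm2t, norm_Gn, RCLike.norm_conj]
    field_simp
  rw [(hasDerivAt_gamma χ u ht v).deriv]
  calc ‖s • ∫ y : ℝ,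
        ((t : ℝ) • (-(I / (2 * (t : ℂ))) * Gn t u (v * t + s * y))) * (starRingEnd ℂ) (χ y)‖
      = s * ‖∫ y : ℝ,
        ((t : ℝ) • (-(I / (2 * (t : ℂ))) * Gn t u (v * t + s * y))) * (starRingEnd ℂ) (χ y)‖ := by
        rw [norm_smul, Real.norm_eq_abs, abs_of_pos hs]
    _ ≤ s * ∫ y : ℝ,
        ‖((t : ℝ) • (-(I / (2 * (t : ℂ))) * Gn t u (v * t + s * y))) * (starRingEnd ℂ) (χ y)‖ :=
        mul_le_mul_of_nonneg_left (norm_integral_le_integral_norm _) hs.le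
    _ = s * ∫ y : ℝ, (1 / 2) * (‖LOp t u (v * t + s * y)‖ * ‖χ y‖) := by simp_rw [hptnorm]
    _ = (s / 2) * ∫ y : ℝ, ‖LOp t u (v * t + s * y)‖ * ‖χ y‖ := by
        rw [MeasureTheory.integral_const_mul]; ring

/-- Derivative bound for the asymptotic profile:
`‖∂_v γ(t,·)‖_{L²_v} ≤ C ‖Lu‖_{L²_x}` with `Lu = xu + 2it∂ₓu`,
`C` depending only on `χ`. -/
theorem gamma_deriv_L2_bound (χ : SchwartzMap ℝ ℂ) (hχ : (∫ y : ℝ, χ y) = 1) :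
    ∃ C : ℝ, 0 < C ∧ ∀ (t : ℝ), 0 < t → ∀ u : SchwartzMap ℝ ℂ,
      (∫ v : ℝ, ‖deriv (fun w : ℝ => asymProfile χ (fun x => u x) t w) v‖ ^ 2) ^ ((1 : ℝ) / 2) ≤
        C * (∫ x : ℝ, ‖(x : ℂ) * u x + 2 * I * (t : ℂ) * deriv u x‖ ^ 2) ^ ((1 : ℝ) / 2) := by
  classical
  set N : ℝ := ∫ y : ℝ, ‖χ y‖ with hN
  have hN1 : 1 ≤ N := by
    have h0 : (1 : ℝ) = ‖∫ y : ℝ, χ y‖ := by rw [hχ]; simp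
    exact h0.le.trans (norm_integral_le_integral_norm _)
  have hN0 : 0 < N := lt_of_lt_of_le one_pos hN1
  refine ⟨N / 2, by positivity, ?_⟩
  intro t ht u
  set s := Real.sqrt t with hsdef
  have hs : 0 < s := Real.sqrt_pos.mpr ht
  have hs2 : s * s = t := Real.mul_self_sqrt ht.le
  set g : ℝ → ℝ := fun x => ‖LOp t u x‖ with hg
  have hgc : Continuous g := (LOp t u).continuous.norm
  set Bq : ℝ≥0∞ := ∫⁻ x : ℝ, ENNReal.ofReal (g x) ^ 2 with hBq
  set Xq : ℝ≥0∞ := ∫⁻ y : ℝ, ENNReal.ofReal ‖χ y‖ with hXq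
  have hXqN : Xq = ENNReal.ofReal N :=
    (ofReal_integral_eq_lintegral_ofReal χ.integrable.norm
      (Filter.Eventually.of_forall fun y => norm_nonneg _)).symm
  have hXq_ne : Xq ≠ ⊤ := by rw [hXqN]; exact ENNReal.ofReal_ne_top
  have hBq_ne : Bq ≠ ⊤ := by
    set M := SchwartzMap.seminorm ℝ 0 0 (LOp t u) with hMdef
    have hM : ∀ x, g x ≤ M := fun x => (LOp t u).norm_le_seminorm ℝ x
    have h1 : Bq ≤ ENNReal.ofReal M * ∫⁻ x : ℝ, ENNReal.ofReal (g x) := by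
      rw [← lintegral_const_mul' _ _ ENNReal.ofReal_ne_top]
      refine lintegral_mono fun x => ?_
      rw [pow_two]
      exact mul_le_mul' (ENNReal.ofReal_le_ofReal (hM x)) le_rfl
    have h2 : (∫⁻ x : ℝ, ENNReal.ofReal (g x)) < ⊤ := by
      have h3 := ((LOp t u).integrable (μ := volume)).hasFiniteIntegral
      rw [HasFiniteIntegral] at h3
      refine lt_of_eq_of_lt (lintegral_congr fun x => ?_) h3
      exact ofReal_norm_eq_enorm _
    exact (h1.trans_lt (ENNReal.mul_lt_top ENNReal.ofReal_lt_top h2)).ne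
  -- pointwise bound
  set γ : ℝ → ℂ := fun w : ℝ => asymProfile χ (fun x => u x) t w with hγ
  have key : ∀ v : ℝ, ENNReal.ofReal (‖deriv γ v‖ ^ 2) ≤
      (ENNReal.ofReal ((s / 2) ^ 2) * Xq) *
        ∫⁻ y : ℝ, ENNReal.ofReal (g (v * t + s * y)) ^ 2 * ENNReal.ofReal ‖χ y‖ := by
    intro v
    have h1 := norm_deriv_gamma_le χ u ht v
    set Iv : ℝ := ∫ y : ℝ, g (v * t + s * y) * ‖χ y‖ with hIvdef
    have hIv0 : 0 ≤ Iv :=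
      integral_nonneg fun y => mul_nonneg (norm_nonneg _) (norm_nonneg _)
    have h2 : ENNReal.ofReal (‖deriv γ v‖ ^ 2) ≤
        ENNReal.ofReal ((s / 2) ^ 2) * ENNReal.ofReal Iv ^ 2 := by
      calc ENNReal.ofReal (‖deriv γ v‖ ^ 2) ≤ ENNReal.ofReal ((s / 2 * Iv) ^ 2) :=
            ENNReal.ofReal_le_ofReal (pow_le_pow_left₀ (norm_nonneg _) h1 2)
        _ = ENNReal.ofReal ((s / 2) ^ 2) * ENNReal.ofReal Iv ^ 2 := by
            rw [mul_pow, ENNReal.ofReal_mul (by positivity), ENNReal.ofReal_pow hIv0]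
    refine h2.trans ?_
    set Av : ℝ≥0∞ := ∫⁻ y : ℝ, ENNReal.ofReal (g (v * t + s * y)) ^ 2 * ENNReal.ofReal ‖χ y‖
      with hAvdef
    have hcontg : Continuous fun y : ℝ => g (v * t + s * y) := hgc.comp (by fun_prop)
    have hmeasg : Measurable fun y : ℝ => ENNReal.ofReal (g (v * t + s * y)) :=
      hcontg.measurable.ennreal_ofReal
    have hmeasχ : Measurable fun y : ℝ => ENNReal.ofReal ‖χ y‖ :=
      χ.continuous.norm.measurable.ennreal_ofReal
    have h3 : ENNReal.ofReal Iv ≤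
        ∫⁻ y : ℝ, ENNReal.ofReal (g (v * t + s * y)) * ENNReal.ofReal ‖χ y‖ := by
      rw [hIvdef, integral_eq_lintegral_of_nonneg_ae
        (Filter.Eventually.of_forall fun y => mul_nonneg (norm_nonneg _) (norm_nonneg _))
        ((hcontg.mul χ.continuous.norm).aestronglyMeasurable)]
      refine le_trans ENNReal.ofReal_toReal_le (le_of_eq (lintegral_congr fun y => ?_))
      rw [ENNReal.ofReal_mul (norm_nonneg _)]
    have hhalf : ∀ b : ℝ≥0∞, b ^ ((1 : ℝ) / 2) * b ^ ((1 : ℝ) / 2) = b := by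
      intro b
      rw [← ENNReal.rpow_add_of_nonneg _ _ (by norm_num) (by norm_num)]
      norm_num
    have hsqhalf : ∀ b : ℝ≥0∞, (b ^ ((1 : ℝ) / 2)) ^ 2 = b := by
      intro b
      rw [sq, hhalf]
    have h4 : (∫⁻ y : ℝ, ENNReal.ofReal (g (v * t + s * y)) * ENNReal.ofReal ‖χ y‖) ^ 2 ≤
        Av * Xq := by
      set f1 : ℝ → ℝ≥0∞ :=
        fun y => ENNReal.ofReal (g (v * t + s * y)) * ENNReal.ofReal ‖χ y‖ ^ ((1 : ℝ) / 2)
        with hf1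
      set f2 : ℝ → ℝ≥0∞ := fun y => ENNReal.ofReal ‖χ y‖ ^ ((1 : ℝ) / 2) with hf2
      have hpq : (2 : ℝ).HolderConjugate 2 := Real.HolderConjugate.two_two
      have hcs := ENNReal.lintegral_mul_le_Lp_mul_Lq volume hpq (f := f1) (g := f2)
        (hmeasg.mul (hmeasχ.pow_const _)).aemeasurable (hmeasχ.pow_const _).aemeasurable
      have e1 : ∀ y : ℝ, (f1 * f2) y = ENNReal.ofReal (g (v * t + s * y)) * ENNReal.ofReal ‖χ y‖ := by
        intro y
        simp only [hf1, hf2, Pi.mul_apply]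
        rw [mul_assoc, hhalf]
      have hbsq : ∀ b : ℝ≥0∞, (b ^ ((1 : ℝ) / 2)) ^ (2 : ℝ) = b := by
        intro b
        rw [← ENNReal.rpow_mul]
        norm_num
      have e2 : ∀ y : ℝ, f1 y ^ (2 : ℝ) =
          ENNReal.ofReal (g (v * t + s * y)) ^ 2 * ENNReal.ofReal ‖χ y‖ := by
        intro y
        rw [hf1, ENNReal.mul_rpow_of_nonneg _ _ (by norm_num : (0:ℝ) ≤ 2), hbsq,
          show (2 : ℝ) = ((2 : ℕ) : ℝ) by norm_num, ENNReal.rpow_natCast]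
      have e3 : ∀ y : ℝ, f2 y ^ (2 : ℝ) = ENNReal.ofReal ‖χ y‖ := fun y => hbsq _
      calc (∫⁻ y : ℝ, ENNReal.ofReal (g (v * t + s * y)) * ENNReal.ofReal ‖χ y‖) ^ 2
          = (∫⁻ y : ℝ, (f1 * f2) y) ^ 2 := by rw [lintegral_congr e1]
        _ ≤ ((∫⁻ y : ℝ, f1 y ^ (2 : ℝ)) ^ (1 / (2 : ℝ)) *
              (∫⁻ y : ℝ, f2 y ^ (2 : ℝ)) ^ (1 / (2 : ℝ))) ^ 2 := pow_le_pow_left' hcs 2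
        _ = (∫⁻ y : ℝ, f1 y ^ (2 : ℝ)) * (∫⁻ y : ℝ, f2 y ^ (2 : ℝ)) := by
            rw [mul_pow, hsqhalf, hsqhalf]
        _ = Av * Xq := by rw [lintegral_congr e2, lintegral_congr e3]
    calc ENNReal.ofReal ((s / 2) ^ 2) * ENNReal.ofReal Iv ^ 2
        ≤ ENNReal.ofReal ((s / 2) ^ 2) * (Av * Xq) := by
          exact mul_le_mul' le_rfl ((pow_le_pow_left' h3 2).trans h4)
      _ = (ENNReal.ofReal ((s / 2) ^ 2) * Xq) * Av := by ring
  -- integrate the pointwise bound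
  set E : ℝ≥0∞ := ∫⁻ v : ℝ, ENNReal.ofReal (‖deriv γ v‖ ^ 2) with hE
  have hmain : E ≤ ENNReal.ofReal ((N / 2) ^ 2) * Bq := by
    have hφmeas : Measurable (Function.uncurry fun v y : ℝ =>
        ENNReal.ofReal (g (v * t + s * y)) ^ 2 * ENNReal.ofReal ‖χ y‖) := by
      have hc1 : Continuous fun p : ℝ × ℝ => g (p.1 * t + s * p.2) := hgc.comp (by fun_prop)
      have hc2 : Continuous fun p : ℝ × ℝ => ‖χ p.2‖ := χ.continuous.norm.comp continuous_snd
      exact ((hc1.measurable.ennreal_ofReal.pow_const 2).mul hc2.measurable.ennreal_ofReal)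
    have hconst_ne : ENNReal.ofReal ((s / 2) ^ 2) * Xq ≠ ⊤ :=
      ENNReal.mul_ne_top ENNReal.ofReal_ne_top hXq_ne
    have hcov : ∀ c : ℝ, (∫⁻ v : ℝ, ENNReal.ofReal (g (v * t + c)) ^ 2) =
        ENNReal.ofReal t⁻¹ * Bq := by
      intro c
      have hH : Measurable fun x : ℝ => ENNReal.ofReal (g x) ^ 2 :=
        hgc.measurable.ennreal_ofReal.pow_const 2
      have hH2 : Measurable fun z : ℝ => ENNReal.ofReal (g (z + c)) ^ 2 :=
        hH.comp (measurable_add_const c)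
      have e2 : (∫⁻ v : ℝ, ENNReal.ofReal (g (t * v + c)) ^ 2) =
          ∫⁻ z : ℝ, ENNReal.ofReal (g (z + c)) ^ 2
            ∂(Measure.map (fun x : ℝ => t * x) volume) :=
        (lintegral_map hH2 (measurable_const_mul t)).symm
      calc (∫⁻ v : ℝ, ENNReal.ofReal (g (v * t + c)) ^ 2)
          = ∫⁻ v : ℝ, ENNReal.ofReal (g (t * v + c)) ^ 2 :=
            lintegral_congr fun v => by rw [mul_comm]
        _ = ∫⁻ z : ℝ, ENNReal.ofReal (g (z + c)) ^ 2
            ∂(Measure.map (fun x : ℝ => t * x) volume) := e2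
        _ = ENNReal.ofReal |t⁻¹| * ∫⁻ z : ℝ, ENNReal.ofReal (g (z + c)) ^ 2 := by
            rw [Real.map_volume_mul_left ht.ne', lintegral_smul_measure, smul_eq_mul]
        _ = ENNReal.ofReal t⁻¹ * Bq := by
            rw [lintegral_add_right_eq_self (fun x : ℝ => ENNReal.ofReal (g x) ^ 2) c,
              abs_of_pos (inv_pos.mpr ht)]
    calc E ≤ ∫⁻ v : ℝ, (ENNReal.ofReal ((s / 2) ^ 2) * Xq) *
          ∫⁻ y : ℝ, ENNReal.ofReal (g (v * t + s * y)) ^ 2 * ENNReal.ofReal ‖χ y‖ :=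
          lintegral_mono key
      _ = (ENNReal.ofReal ((s / 2) ^ 2) * Xq) * ∫⁻ v : ℝ,
          ∫⁻ y : ℝ, ENNReal.ofReal (g (v * t + s * y)) ^ 2 * ENNReal.ofReal ‖χ y‖ :=
          lintegral_const_mul' _ _ hconst_ne
      _ = (ENNReal.ofReal ((s / 2) ^ 2) * Xq) * ∫⁻ y : ℝ,
          ∫⁻ v : ℝ, ENNReal.ofReal (g (v * t + s * y)) ^ 2 * ENNReal.ofReal ‖χ y‖ := by
          rw [lintegral_lintegral_swap hφmeas.aemeasurable]
      _ = (ENNReal.ofReal ((s / 2) ^ 2) * Xq) * ∫⁻ y : ℝ,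
          (ENNReal.ofReal t⁻¹ * Bq) * ENNReal.ofReal ‖χ y‖ := by
          congr 1
          refine lintegral_congr fun y => ?_
          rw [lintegral_mul_const' _ _ ENNReal.ofReal_ne_top, hcov (s * y)]
      _ = (ENNReal.ofReal ((s / 2) ^ 2) * Xq) * ((ENNReal.ofReal t⁻¹ * Bq) * Xq) := by
          rw [lintegral_const_mul' _ _ (ENNReal.mul_ne_top ENNReal.ofReal_ne_top hBq_ne)]
      _ = ENNReal.ofReal ((N / 2) ^ 2) * Bq := by
          rw [hXqN]
          have hss : (s / 2) ^ 2 = t / 4 := by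
            rw [div_pow, sq, hs2]
            norm_num
          calc (ENNReal.ofReal ((s / 2) ^ 2) * ENNReal.ofReal N) *
                ((ENNReal.ofReal t⁻¹ * Bq) * ENNReal.ofReal N)
              = (ENNReal.ofReal ((s / 2) ^ 2) * ENNReal.ofReal N * ENNReal.ofReal t⁻¹ *
                ENNReal.ofReal N) * Bq := by ring
            _ = ENNReal.ofReal ((s / 2) ^ 2 * N * t⁻¹ * N) * Bq := by
                rw [← ENNReal.ofReal_mul (by positivity), ← ENNReal.ofReal_mul (by positivity),
                  ← ENNReal.ofReal_mul (by positivity)]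
            _ = ENNReal.ofReal ((N / 2) ^ 2) * Bq := by
                congr 1
                rw [hss]
                field_simp
                ring
  -- convert to real integrals
  have hLHS : (∫ v : ℝ, ‖deriv γ v‖ ^ 2) = E.toReal := by
    refine integral_eq_lintegral_of_nonneg_ae
      (Filter.Eventually.of_forall fun v => by positivity) ?_
    exact ((measurable_deriv γ).norm.pow_const 2).aestronglyMeasurable
  have hRHS : (∫ x : ℝ, ‖(x : ℂ) * u x + 2 * I * (t : ℂ) * deriv u x‖ ^ 2) = Bq.toReal := by
    have hpt : ∀ x : ℝ, ‖(x : ℂ) * u x + 2 * I * (t : ℂ) * deriv u x‖ ^ 2 = g x ^ 2 := by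
      intro x; rw [hg]; simp only [LOp_apply]
    simp_rw [hpt]
    have hg0 : ∀ x, 0 ≤ g x := fun x => norm_nonneg _
    rw [integral_eq_lintegral_of_nonneg_ae (f := fun x => g x ^ 2)
      (Filter.Eventually.of_forall fun x => by positivity)
      ((hgc.pow 2).aestronglyMeasurable : AEStronglyMeasurable (fun x => g x ^ 2) volume)]
    congr 1
    refine lintegral_congr fun x => ?_
    rw [ENNReal.ofReal_pow (hg0 x)]
  -- final computation
  rw [hLHS, hRHS]
  have h5 : E.toReal ≤ (N / 2) ^ 2 * Bq.toReal := by
    have h := ENNReal.toReal_mono (by finiteness) hmain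
    rwa [ENNReal.toReal_mul, ENNReal.toReal_ofReal (by positivity)] at h
  have h6 : (E.toReal) ^ ((1 : ℝ) / 2) ≤ ((N / 2) ^ 2 * Bq.toReal) ^ ((1 : ℝ) / 2) :=
    Real.rpow_le_rpow ENNReal.toReal_nonneg h5 (by norm_num)
  refine h6.trans (le_of_eq ?_)
  rw [Real.mul_rpow (by positivity) ENNReal.toReal_nonneg]
  congr 1
  rw [← Real.rpow_natCast (N / 2) 2, ← Real.rpow_mul (by positivity)]
  norm_num
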